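/- The formal derivative of the Catalan generating function satisfies c'(x)·(1 - 2x·c(x)) = c(x)^2 as formal power series. -/

import Mathlib

open PowerSeries

/-- The generating function of the Catalan numbers `C_k = (2k)!/(k!(k+1)!)` over `ℚ`. -/
noncomputable def catGF : PowerSeries ℚ :=
  PowerSeries.mk fun k => ((2 * k).factorial : ℚ) / ((k.factorial : ℚ) * ((k + 1).factorial : ℚ))

lemma catGF_coeff (k : ℕ) : (PowerSeries.coeff k) catGF = (catalan k : ℚ) := by
  rw [catGF, PowerSeries.coeff_mk]
  have h1 : (k + 1) * catalan k * (k.factorial * k.factorial) = (2 * k).factorial := by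
    have e := Nat.choose_mul_factorial_mul_factorial (show k ≤ 2 * k by omega)
    rw [show 2 * k - k = k by omega] at e
    rw [succ_mul_catalan_eq_centralBinom, Nat.centralBinom, ← mul_assoc, e]
  have h2 : ((2 * k).factorial : ℚ) = (k + 1) * catalan k * (k.factorial * k.factorial) := by
    exact_mod_cast congrArg (Nat.cast : ℕ → ℚ) h1.symm
  rw [h2, Nat.factorial_succ]
  push_cast
  field_simp

lemma catGF_quad : catGF = 1 + PowerSeries.X * catGF ^ 2 := by
  ext n
  rcases n with _ | n
  · simp [catGF_coeff]
  · rw [map_add, PowerSeries.coeff_succ_X_mul, catGF_coeff]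
    have : (PowerSeries.coeff (n + 1)) (1 : PowerSeries ℚ) = 0 := by simp
    rw [this, zero_add, sq, PowerSeries.coeff_mul]
    rw [catalan_succ']
    push_cast
    exact Finset.sum_congr rfl fun ij _ => by rw [catGF_coeff, catGF_coeff]

/-- `c'(x)·(1 - 2x·c(x)) = c(x)^2` as formal power series. -/
theorem catGF_deriv_eq :
    catGF.derivativeFun * (1 - 2 * PowerSeries.X * catGF) = catGF ^ 2 := by
  have h : catGF.derivativeFun = catGF ^ 2 + 2 * PowerSeries.X * catGF * catGF.derivativeFun := by
    conv_lhs => rw [catGF_quad]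
    rw [derivativeFun_add, derivativeFun_one, zero_add, derivativeFun_mul, sq,
      derivativeFun_mul]
    have hX : (PowerSeries.X : PowerSeries ℚ).derivativeFun = 1 := by
      have := PowerSeries.derivative_X (R := ℚ)
      exact this
    rw [hX]
    simp only [smul_eq_mul]
    ring
  linear_combination h
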